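/- Let a_0 ≥ … ≥ a_{k-1} > 0 and b_0 ≥ … ≥ b_{k-1} > 0 with a_0 = α·a_{k-1} and b_0 = β·b_{k-1}. Then for all indices l, j: (∑_i a_i b_{(i+l) mod k}) / (∑_i a_i b_{(i+j) mod k}) ≤ min(α, β). In particular, the product layer decomposition of H_X with layer sizes |L_l| = ∑_i a_i b_{(i+l) mod k} is min(α,β)-balanced. -/
import Mathlib


/-- If a₀ = α·a_{k-1} and b₀ = β·b_{k-1} for decreasing positive sequences,
then any two cyclic-shift sums have ratio at most min(α,β): the product layer
decomposition is min(α,β)-balanced. -/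
theorem hgp_balanced (k : ℕ) (hk : 0 < k) (a b : Fin k → ℝ) (α β : ℝ)
    (ha : ∀ i j : Fin k, i ≤ j → a j ≤ a i)
    (hb : ∀ i j : Fin k, i ≤ j → b j ≤ b i)
    (hapos : ∀ i, 0 < a i) (hbpos : ∀ i, 0 < b i)
    (hα : a ⟨0, hk⟩ = α * a ⟨k - 1, by omega⟩)
    (hβ : b ⟨0, hk⟩ = β * b ⟨k - 1, by omega⟩) :
    ∀ l j : Fin k,
      (∑ i, a i * b (i + l)) / (∑ i, a i * b (i + j)) ≤ min α β := by
  haveI : NeZero k := ⟨hk.ne'⟩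
  intro l j
  set i0 : Fin k := ⟨0, hk⟩ with hi0
  set iK : Fin k := ⟨k - 1, by omega⟩ with hiK
  have hle0 : ∀ i : Fin k, i0 ≤ i := fun i => by
    simp [Fin.le_def, hi0]
  have hleK : ∀ i : Fin k, i ≤ iK := fun i => by
    have := i.isLt; simp [Fin.le_def, hiK]; omega
  have haub : ∀ i : Fin k, a i ≤ a i0 := fun i => ha i0 i (hle0 i)
  have halb : ∀ i : Fin k, a iK ≤ a i := fun i => ha i iK (hleK i)
  have hbub : ∀ i : Fin k, b i ≤ b i0 := fun i => hb i0 i (hle0 i)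
  have hblb : ∀ i : Fin k, b iK ≤ b i := fun i => hb i iK (hleK i)
  have hαpos : 0 < α := by nlinarith [hapos i0, hapos iK]
  have hβpos : 0 < β := by nlinarith [hbpos i0, hbpos iK]
  set A : ℝ := ∑ i, a i with hA
  set B : ℝ := ∑ i, b i with hB
  have hApos : 0 < A := Finset.sum_pos (fun i _ => hapos i) ⟨i0, Finset.mem_univ _⟩
  have hBpos : 0 < B := Finset.sum_pos (fun i _ => hbpos i) ⟨i0, Finset.mem_univ _⟩
  have hshift : ∀ m : Fin k, (∑ i, b (i + m)) = B :=
    fun m => Fintype.sum_equiv (Equiv.addRight m) _ _ (fun i => rfl)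
  have hSub : ∀ m : Fin k, (∑ i, a i * b (i + m)) ≤ a i0 * B := fun m => by
    rw [← hshift m, Finset.mul_sum]
    exact Finset.sum_le_sum fun i _ =>
      mul_le_mul_of_nonneg_right (haub i) (hbpos _).le
  have hSlb : ∀ m : Fin k, a iK * B ≤ (∑ i, a i * b (i + m)) := fun m => by
    rw [← hshift m, Finset.mul_sum]
    exact Finset.sum_le_sum fun i _ =>
      mul_le_mul_of_nonneg_right (halb i) (hbpos _).le
  have hSub' : ∀ m : Fin k, (∑ i, a i * b (i + m)) ≤ b i0 * A := fun m => by
    rw [hA, Finset.mul_sum]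
    exact Finset.sum_le_sum fun i _ => by
      have := mul_le_mul_of_nonneg_left (hbub (i + m)) (hapos i).le
      linarith [this]
  have hSlb' : ∀ m : Fin k, b iK * A ≤ (∑ i, a i * b (i + m)) := fun m => by
    rw [hA, Finset.mul_sum]
    exact Finset.sum_le_sum fun i _ => by
      have := mul_le_mul_of_nonneg_left (hblb (i + m)) (hapos i).le
      linarith [this]
  have hSjpos : 0 < ∑ i, a i * b (i + j) :=
    Finset.sum_pos (fun i _ => mul_pos (hapos i) (hbpos _)) ⟨i0, Finset.mem_univ _⟩
  refine le_min ?_ ?_ <;> rw [div_le_iff₀ hSjpos]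
  · calc (∑ i, a i * b (i + l)) ≤ a i0 * B := hSub l
      _ = α * (a iK * B) := by rw [hα]; ring
      _ ≤ α * ∑ i, a i * b (i + j) :=
        mul_le_mul_of_nonneg_left (hSlb j) hαpos.le
  · calc (∑ i, a i * b (i + l)) ≤ b i0 * A := hSub' l
      _ = β * (b iK * A) := by rw [hβ]; ring
      _ ≤ β * ∑ i, a i * b (i + j) :=
        mul_le_mul_of_nonneg_left (hSlb' j) hβpos.le
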